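/- Let D be a directed acyclic graph with s, t ∈ V(D) and nonnegative edge costs c : E(D) → ℝ≥0. For every x : E(D) → ℝ with x ≥ 0 satisfying Σ_{e ∈ P} x(e) ≥ 1 for every odd-length s→t path P in D, there exists a set F ⊆ E(D) that intersects every odd-length s→t path in D and satisfies Σ_{e ∈ F} c(e) ≤ 2 · Σ_{e ∈ E(D)} c(e) x(e). In particular, the integrality gap of the odd path blocker LP in directed acyclic graphs is at most 2. -/

import Mathlib

/-- A (simple) directed path in the directed graph `G`, represented as a nonempty
list of pairwise distinct vertices in which every consecutive pair is an edge of `G`. -/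
def IsPath {V : Type*} (G : V → V → Prop) (p : List V) : Prop :=
  p ≠ [] ∧ p.Chain' G ∧ p.Nodup

/-- `p` is a directed path from `u` to `v` in `G`. -/
def IsPathFrom {V : Type*} (G : V → V → Prop) (u v : V) (p : List V) : Prop :=
  IsPath G p ∧ p.head? = some u ∧ p.getLast? = some v

/-- The length (number of edges) of a path, given as its list of vertices. -/
def pathLen {V : Type*} (p : List V) : ℕ := p.length - 1

/-- The list of directed edges traversed by a path. -/
def edgesOf {V : Type*} (p : List V) : List (V × V) := p.zip p.tail

/-- A directed graph is acyclic (a DAG) if no vertex lies on a directed cycle. -/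
def Acyclic {V : Type*} (G : V → V → Prop) : Prop :=
  ∀ v, ¬ Relation.TransGen G v v

/-- The graph obtained from `G` by deleting the vertex set `M`. -/
def delV {V : Type*} (G : V → V → Prop) (M : Set V) : V → V → Prop :=
  fun a b => G a b ∧ a ∉ M ∧ b ∉ M

/-- **(LP-relative 2-approximation for `(s → t)`-OddPathEdgeBlocker in DAGs.)**
Let `D` be a DAG with `s, t ∈ V(D)` and nonnegative edge costs `c`.  For every
nonnegative fractional solution `x` of the odd path blocker LP (i.e.
`∑_{e ∈ P} x(e) ≥ 1` for every odd-length `s → t` path `P`), there is a set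
`F ⊆ E(D)` of edges intersecting every odd-length `s → t` path of `D` with
`∑_{e ∈ F} c(e) ≤ 2 · ∑_{e ∈ E(D)} c(e) x(e)`.  In particular, the integrality
gap of the odd path blocker LP in DAGs is at most `2`. -/
lemma edgesOf_cons_cons {V : Type*} (u v : V) (l : List V) :
    edgesOf (u :: v :: l) = (u, v) :: edgesOf (v :: l) := rfl

lemma mem_edgesOf_chain' {V : Type*} {G : V → V → Prop} :
    ∀ {p : List V} {e : V × V}, List.Chain' G p → e ∈ edgesOf p → G e.1 e.2 := by
  intro p
  induction p with
  | nil => intro e _ h; simp [edgesOf] at h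
  | cons u q ih =>
    intro e hc he
    cases q with
    | nil => simp [edgesOf] at he
    | cons v r =>
      rw [edgesOf_cons_cons] at he
      rw [List.Chain', List.isChain_cons_cons] at hc
      rcases List.mem_cons.mp he with h | h
      · subst h; exact hc.1
      · exact ih hc.2 h

lemma reflTrans_of_mem_chain' {V : Type*} {G : V → V → Prop} :
    ∀ {p : List V} {w u : V}, List.Chain' G p → w ∈ p → p.getLast? = some u →
      Relation.ReflTransGen G w u := by
  intro p
  induction p with
  | nil => intro w u _ h; simp at h
  | cons a q ih =>
    intro w u hc hw hl
    cases q with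
    | nil =>
      simp at hw hl
      subst hw; subst hl; exact Relation.ReflTransGen.refl
    | cons b r =>
      rw [List.Chain', List.isChain_cons_cons] at hc
      rw [List.getLast?_cons_cons] at hl
      rcases List.mem_cons.mp hw with h | h
      · subst h
        exact Relation.ReflTransGen.head hc.1 (ih hc.2 List.mem_cons_self hl)
      · exact ih hc.2 h hl

lemma edgesOf_concat {V : Type*} :
    ∀ (p : List V) (u v : V), p.getLast? = some u →
      edgesOf (p ++ [v]) = edgesOf p ++ [(u, v)] := by
  intro p
  induction p with
  | nil => intro u v h; simp at h
  | cons a q ih =>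
    intro u v h
    cases q with
    | nil =>
      simp at h; subst h
      simp [edgesOf]
    | cons b r =>
      rw [List.getLast?_cons_cons] at h
      have := ih u v h
      simp only [List.cons_append, edgesOf_cons_cons] at *
      rw [this]

lemma nodup_list_finite {V : Type*} [Fintype V] : ({p : List V | p.Nodup}).Finite := by
  classical
  have : Fintype {l : List V // l.Nodup} := fintypeNodupList
  have h2 : Finite ↑{p : List V | p.Nodup} := Finite.of_fintype {l : List V // l.Nodup}
  exact @Set.toFinite _ _ h2

lemma cross_lemma {V : Type*} {G : V → V → Prop} (d : V → Bool → ℝ) (θ : ℝ) :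
    ∀ (p : List V) (u : V) (b : Bool) (w : V), List.Chain' G (u :: p) →
      (u :: p).getLast? = some w → d u b ≤ θ →
      θ < d w (xor b (decide (Odd p.length))) →
      ∃ a cc : V, (a, cc) ∈ edgesOf (u :: p) ∧ ∃ b' : Bool, d a b' ≤ θ ∧ θ < d cc (!b') := by
  intro p
  induction p with
  | nil =>
    intro u b w _ hl hub hw
    simp at hl; subst hl
    simp at hw
    exact absurd hub (not_le.mpr hw)
  | cons v q ih =>
    intro u b w hc hl hub hw
    by_cases hdv : d v (!b) ≤ θ
    · obtain ⟨a, cc, hmem, hb⟩ := ih v (!b) w (List.isChain_cons_cons.mp hc).2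
        (by rw [List.getLast?_cons_cons] at hl; exact hl) hdv
        (by
          have : (xor (!b) (decide (Odd q.length))) =
              (xor b (decide (Odd (v :: q).length))) := by
            simp only [List.length_cons]
            cases b <;> by_cases h : Odd q.length <;>
              simp [Nat.odd_add_one, h, Nat.not_odd_iff_even] at * <;> simp [h, *]
          rw [this]; exact hw)
      exact ⟨a, cc, by rw [edgesOf_cons_cons]; exact List.mem_cons_of_mem _ hmem, hb⟩
    · exact ⟨u, v, by rw [edgesOf_cons_cons]; exact List.mem_cons_self, b, hub,
        not_le.mp hdv⟩

open MeasureTheory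

theorem odd_path_blocker_gap_le_two {V : Type*} [Fintype V]
    (D : V → V → Prop) (hD : Acyclic D) (s t : V)
    (c : V × V → ℝ) (hc : ∀ e, 0 ≤ c e)
    (x : V × V → ℝ) (hx0 : ∀ e, 0 ≤ x e)
    (hx : ∀ p, IsPathFrom D s t p → Odd (pathLen p) →
      1 ≤ ((edgesOf p).map x).sum) :
    ∃ F : Set (V × V), F ⊆ {e : V × V | D e.1 e.2} ∧
      (∀ p, IsPathFrom D s t p → Odd (pathLen p) → ∃ e ∈ edgesOf p, e ∈ F) ∧
      ∑ᶠ e ∈ F, c e ≤ 2 * ∑ᶠ e ∈ {e : V × V | D e.1 e.2}, c e * x e := by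
  classical
  -- weights and shortest-path potentials on the parity graph
  set wsum : List V → ℝ := fun p => ((edgesOf p).map x).sum with hwsum
  set paths : V → Bool → Set (List V) :=
    fun v b => {p | IsPathFrom D s v p ∧ (Odd (pathLen p) ↔ b = true)} with hpaths
  set vals : V → Bool → Set ℝ := fun v b => insert (2 : ℝ) (wsum '' paths v b) with hvals
  set d : V → Bool → ℝ := fun v b => sInf (vals v b) with hd
  have hvfin : ∀ v b, (vals v b).Finite := by
    intro v b
    exact Set.Finite.insert _ ((nodup_list_finite.subset
      (fun p hp => hp.1.1.2.2)).image _)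
  have hvne : ∀ v b, (vals v b).Nonempty := fun v b => ⟨2, Set.mem_insert _ _⟩
  have hbdd : ∀ v b, BddBelow (vals v b) := fun v b => (hvfin v b).bddBelow
  have hwnn : ∀ p, 0 ≤ wsum p := by
    intro p
    apply List.sum_nonneg
    intro a ha
    rcases List.mem_map.mp ha with ⟨e, _, rfl⟩
    exact hx0 e
  have hd0 : ∀ v b, 0 ≤ d v b := by
    intro v b
    apply le_csInf (hvne v b)
    intro y hy
    rcases Set.mem_insert_iff.mp hy with h | ⟨p, _, rfl⟩
    · subst h; norm_num
    · exact hwnn p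
  have hd2 : ∀ v b, d v b ≤ 2 := fun v b => csInf_le (hbdd v b) (Set.mem_insert _ _)
  have hds : d s false ≤ 0 := by
    have hmem : (0 : ℝ) ∈ vals s false := by
      refine Set.mem_insert_of_mem _ ⟨[s], ⟨⟨⟨by simp, List.isChain_singleton s, by simp⟩, rfl, rfl⟩, by
        simp [pathLen]⟩, by simp [hwsum, edgesOf]⟩
    exact csInf_le (hbdd s false) hmem
  have hdt : 1 ≤ d t true := by
    apply le_csInf (hvne t true)
    intro y hy
    rcases Set.mem_insert_iff.mp hy with h | ⟨p, hp, rfl⟩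
    · subst h; norm_num
    · exact hx p hp.1 (hp.2.mpr rfl)
  have attain : ∀ v b, d v b < 2 → ∃ p ∈ paths v b, wsum p = d v b := by
    intro v b hlt
    have hmem := (hvne v b).csInf_mem (hvfin v b)
    rcases Set.mem_insert_iff.mp hmem with h | ⟨p, hp, hw⟩
    · rw [hd] at hlt; rw [← h] at hlt; norm_num at hlt
    · exact ⟨p, hp, hw⟩
  have triangle : ∀ u v b, D u v → d u b < 2 → d v (!b) ≤ d u b + x (u, v) := by
    intro u v b huv hlt
    obtain ⟨p, hp, hw⟩ := attain u b hlt
    obtain ⟨⟨⟨hne, hch, hnd⟩, hhd, hlast⟩, hpar⟩ := hp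
    have hvp : v ∉ p := by
      intro hv
      exact hD v (Relation.TransGen.tail' (reflTrans_of_mem_chain' hch hv hlast) huv)
    have hlen1 : 1 ≤ p.length := List.length_pos_iff.mpr hne
    have hpath' : IsPathFrom D s v (p ++ [v]) := by
      refine ⟨⟨by simp, ?_, ?_⟩, ?_, by simp⟩
      · rw [List.Chain', List.isChain_append]
        refine ⟨hch, List.isChain_singleton v, ?_⟩
        intro a ha b' hb'
        rw [hlast] at ha
        simp at ha hb'
        subst ha; subst hb'
        exact huv
      · refine List.Nodup.append hnd (List.nodup_singleton v) ?_
        intro a ha hav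
        simp at hav
        subst hav
        exact hvp ha
      · cases p with
        | nil => exact absurd rfl hne
        | cons a q => simpa using hhd
    have hpar' : Odd (pathLen (p ++ [v])) ↔ ((!b) = true) := by
      have hplen : pathLen (p ++ [v]) = pathLen p + 1 := by
        simp [pathLen]
        omega
      rw [hplen, Nat.odd_add_one, Nat.not_odd_iff_even, ← Nat.not_odd_iff_even, hpar]
      cases b <;> simp
    have hw' : wsum (p ++ [v]) = d u b + x (u, v) := by
      rw [hwsum]
      simp only [edgesOf_concat p u v hlast, List.map_append, List.sum_append,
        List.map_singleton, List.sum_singleton]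
      rw [← hw]
    have : wsum (p ++ [v]) ∈ vals v (!b) :=
      Set.mem_insert_of_mem _ ⟨p ++ [v], ⟨hpath', hpar'⟩, rfl⟩
    calc d v (!b) ≤ wsum (p ++ [v]) := csInf_le (hbdd v (!b)) this
    _ = d u b + x (u, v) := hw'
  -- the edge set of D as a finset
  set Efin : Finset (V × V) := Finset.univ.filter (fun e => D e.1 e.2) with hEfin
  have hEcoe : {e : V × V | D e.1 e.2} = ↑Efin := by
    ext e; simp [hEfin]
  -- threshold intervals
  set Ue : V × V → Set ℝ :=
    fun e => Set.Ico (d e.1 false) (d e.2 true) ∪ Set.Ico (d e.1 true) (d e.2 false)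
    with hUe
  have hUmeas : ∀ e, MeasurableSet (Ue e) := fun e =>
    measurableSet_Ico.union measurableSet_Ico
  set μ : Measure ℝ := volume.restrict (Set.Ico (0 : ℝ) 1) with hμ
  have hμuniv : μ Set.univ = 1 := by
    rw [hμ, Measure.restrict_apply_univ, Real.volume_Ico]
    norm_num
  have hμ0 : μ ≠ 0 := by
    intro h
    rw [h] at hμuniv
    simp at hμuniv
  haveI : IsFiniteMeasure μ := ⟨by rw [hμuniv]; exact ENNReal.one_lt_top⟩
  set costF : ℝ → ℝ := fun θ => ∑ e ∈ Efin, Set.indicator (Ue e) (fun _ => c e) θ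
    with hcostF
  have hint : ∀ e ∈ Efin, Integrable ((Ue e).indicator (fun _ => c e)) μ := by
    intro e _
    rw [integrable_indicator_iff (hUmeas e)]
    refine integrableOn_const (ne_of_lt ?_)
    exact lt_of_le_of_lt (le_trans (measure_mono (Set.subset_univ _)) hμuniv.le)
      ENNReal.one_lt_top
  have hint2 : Integrable costF μ := by
    rw [hcostF]
    exact integrable_finset_sum _ hint
  -- volume bound per edge
  have hvol : ∀ e ∈ Efin, (μ (Ue e)).toReal ≤ 2 * x e := by
    intro e he
    have hDe : D e.1 e.2 := by
      rw [hEfin] at he; simpa using (Finset.mem_filter.mp he).2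
    have hb : ∀ bb : Bool,
        volume (Set.Ico (d e.1 bb) (d e.2 (!bb)) ∩ Set.Ico (0 : ℝ) 1)
          ≤ ENNReal.ofReal (x e) := by
      intro bb
      rw [Set.Ico_inter_Ico, Real.volume_Ico]
      apply ENNReal.ofReal_le_ofReal
      have hmax : d e.1 bb ⊔ (0 : ℝ) = d e.1 bb := sup_eq_left.mpr (hd0 _ _)
      rw [hmax]
      by_cases h1 : d e.1 bb < 1
      · have := triangle e.1 e.2 bb hDe (lt_trans h1 one_lt_two)
        have hmin : d e.2 (!bb) ⊓ (1 : ℝ) ≤ d e.2 (!bb) := inf_le_left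
        linarith
      · push_neg at h1
        have hmin : d e.2 (!bb) ⊓ (1 : ℝ) ≤ 1 := inf_le_right
        linarith [hx0 e]
    have hmeq : μ (Ue e) = volume (Ue e ∩ Set.Ico (0 : ℝ) 1) :=
      Measure.restrict_apply (hUmeas e)
    have hle : μ (Ue e) ≤ ENNReal.ofReal (2 * x e) := by
      rw [hmeq, hUe]
      calc volume ((Set.Ico (d e.1 false) (d e.2 true)
            ∪ Set.Ico (d e.1 true) (d e.2 false)) ∩ Set.Ico (0 : ℝ) 1)
          = volume ((Set.Ico (d e.1 false) (d e.2 true) ∩ Set.Ico (0 : ℝ) 1)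
            ∪ (Set.Ico (d e.1 true) (d e.2 false) ∩ Set.Ico (0 : ℝ) 1)) := by
            rw [Set.union_inter_distrib_right]
        _ ≤ volume (Set.Ico (d e.1 false) (d e.2 true) ∩ Set.Ico (0 : ℝ) 1)
            + volume (Set.Ico (d e.1 true) (d e.2 false) ∩ Set.Ico (0 : ℝ) 1) :=
            measure_union_le _ _
        _ ≤ ENNReal.ofReal (x e) + ENNReal.ofReal (x e) := by
            exact add_le_add (by simpa using hb false) (by simpa using hb true)
        _ = ENNReal.ofReal (2 * x e) := by
            rw [← ENNReal.ofReal_add (hx0 e) (hx0 e)]; ring_nf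
    exact ENNReal.toReal_le_of_le_ofReal (by linarith [hx0 e]) hle
  -- bound on the integral of costF
  have hIcost : ∫ θ, costF θ ∂μ ≤ 2 * ∑ e ∈ Efin, c e * x e := by
    rw [hcostF]
    rw [integral_finset_sum _ hint]
    have heach : ∀ e ∈ Efin,
        ∫ θ, (Ue e).indicator (fun _ => c e) θ ∂μ ≤ 2 * x e * c e := by
      intro e he
      rw [integral_indicator (hUmeas e), setIntegral_const]
      have := hvol e he
      have hce := hc e
      calc (μ (Ue e)).toReal • c e = (μ (Ue e)).toReal * c e := smul_eq_mul _ _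
        _ ≤ (2 * x e) * c e := mul_le_mul_of_nonneg_right this hce
        _ = 2 * x e * c e := rfl
    calc ∑ e ∈ Efin, ∫ θ, (Ue e).indicator (fun _ => c e) θ ∂μ
        ≤ ∑ e ∈ Efin, 2 * x e * c e := Finset.sum_le_sum heach
      _ = 2 * ∑ e ∈ Efin, c e * x e := by rw [Finset.mul_sum]; congr 1; ext e; ring
  -- pick a good threshold
  obtain ⟨θ, hθN, hθavg⟩ := exists_notMem_null_le_average hμ0 hint2
    (N := (Set.Ico (0 : ℝ) 1)ᶜ)
    (by rw [hμ, Measure.restrict_apply measurableSet_Ico.compl]; simp)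
  have hθmem : θ ∈ Set.Ico (0 : ℝ) 1 := by simpa using hθN
  have havg_eq : ⨍ a, costF a ∂μ = ∫ a, costF a ∂μ := by
    rw [average_eq, measureReal_def, hμuniv]
    simp
  have hθgood : costF θ ≤ 2 * ∑ e ∈ Efin, c e * x e := by
    rw [havg_eq] at hθavg
    linarith
  -- the blocking set
  refine ⟨{e : V × V | D e.1 e.2 ∧ θ ∈ Ue e}, fun e he => he.1, ?_, ?_⟩
  · intro p hp hodd
    obtain ⟨⟨hne, hch, hnd⟩, hhd, hlast⟩ := hp
    cases p with
    | nil => exact absurd rfl hne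
    | cons a rest =>
      have has : a = s := by simpa using hhd
      rw [has] at hch hlast ⊢
      have hodd' : Odd rest.length := by simpa [pathLen] using hodd
      obtain ⟨a', cc, hmem, b', hb1, hb2⟩ := cross_lemma d θ rest s false t hch hlast
        (le_trans hds hθmem.1)
        (by simp [hodd']; exact lt_of_lt_of_le hθmem.2 hdt)
      refine ⟨(a', cc), hmem, ?_⟩
      refine ⟨mem_edgesOf_chain' hch hmem, ?_⟩
      cases b' with
      | false => exact Or.inl ⟨hb1, hb2⟩
      | true => exact Or.inr ⟨hb1, hb2⟩
  · have hFeq : {e : V × V | D e.1 e.2 ∧ θ ∈ Ue e}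
        = ↑(Efin.filter (fun e => θ ∈ Ue e)) := by
      ext e; simp [hEfin]
    rw [hFeq, finsum_mem_coe_finset, hEcoe, finsum_mem_coe_finset]
    have : ∑ e ∈ Efin.filter (fun e => θ ∈ Ue e), c e = costF θ := by
      rw [hcostF, Finset.sum_filter]
      congr 1
      ext e
      rw [Set.indicator_apply]
    rw [this]
    exact hθgood
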